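/- There is no online value-sharing rule satisfying individual rationality for online cooperative games with general (monotone, normalized) valuations. Concretely: for the game with N = {1,2}, arrival order (1,2), v({1}) = 2, v({2}) = 3, v({1,2}) = 4, any sequence of allocations that is efficient at each prefix (sum of allocations to arrived players equals value of arrived coalition), non-negative, and never decreases any player's cumulative allocation, must give some player i strictly less than v({i}). -/
import Mathlib


/-- No online value-sharing rule satisfies individual rationality for general
monotone normalized valuations: in the game with `N = {1,2}`, arrival order `(1,2)`,
`v {1} = 2`, `v {2} = 3`, `v {1,2} = 4`, any allocation scheme `φ t p`
(cumulative share of player `p` after step `t`) that is non-negative,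
non-decreasing in time, efficient at each prefix, and gives nothing to players
not yet arrived, must give some player strictly less than her singleton value. -/
theorem no_ir_rule_general_valuations
    (φ : Fin 2 → Fin 2 → ℝ)
    (hnonneg : ∀ t p, 0 ≤ φ t p)
    (hstay : ∀ p, φ 0 p ≤ φ 1 p)
    (heff1 : φ 0 0 = 2)
    (hnotarrived : φ 0 1 = 0)
    (heff2 : φ 1 0 + φ 1 1 = 4) :
    φ 1 0 < 2 ∨ φ 1 1 < 3 := by
  right
  have h := hstay 0
  linarith
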